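/- Let P ⊂ ℝⁿ be a compact convex body with nonempty interior containing 0 in its interior. Then the function W(a) = ∫_P exp(⟨a, x⟩) dx attains a minimum at a unique point a* ∈ ℝⁿ, and a* is the unique solution of ∫_P x·exp(⟨a, x⟩) dx = 0. -/

import Mathlib

open MeasureTheory Metric
open scoped RealInnerProductSpace

variable {n : ℕ}

lemma wz_cont_exp (a : EuclideanSpace ℝ (Fin n)) :
    Continuous (fun x : EuclideanSpace ℝ (Fin n) => Real.exp ⟪a, x⟫) := by
  exact Real.continuous_exp.comp (continuous_const.inner continuous_id)

lemma wz_int_exp {P : Set (EuclideanSpace ℝ (Fin n))} (hP : IsCompact P)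
    (a : EuclideanSpace ℝ (Fin n)) :
    IntegrableOn (fun x => Real.exp ⟪a, x⟫) P := by
  exact ((wz_cont_exp a).continuousOn).integrableOn_compact hP

lemma wz_int_smul {P : Set (EuclideanSpace ℝ (Fin n))} (hP : IsCompact P)
    (a : EuclideanSpace ℝ (Fin n)) :
    IntegrableOn (fun x => Real.exp ⟪a, x⟫ • x) P := by
  exact (((wz_cont_exp a).smul continuous_id).continuousOn).integrableOn_compact hP

lemma wz_int_mul {P : Set (EuclideanSpace ℝ (Fin n))} (hP : IsCompact P)
    (a v : EuclideanSpace ℝ (Fin n)) :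
    IntegrableOn (fun x => Real.exp ⟪a, x⟫ * ⟪v, x⟫) P := by
  have : Continuous (fun x : EuclideanSpace ℝ (Fin n) => Real.exp ⟪a, x⟫ * ⟪v, x⟫) :=
    (wz_cont_exp a).mul (continuous_const.inner continuous_id)
  exact this.continuousOn.integrableOn_compact hP

lemma wz_inner_integral {P : Set (EuclideanSpace ℝ (Fin n))} (hP : IsCompact P)
    (a v : EuclideanSpace ℝ (Fin n)) :
    ∫ x in P, Real.exp ⟪a, x⟫ * ⟪v, x⟫ = ⟪v, ∫ x in P, Real.exp ⟪a, x⟫ • x⟫ := by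
  have h : ∀ x : EuclideanSpace ℝ (Fin n), Real.exp ⟪a, x⟫ * ⟪v, x⟫ = ⟪v, Real.exp ⟪a, x⟫ • x⟫ :=
    fun x => by rw [real_inner_smul_right]
  simp_rw [h]
  exact integral_inner (wz_int_smul hP a) v

lemma wz_cont_aff (a v : EuclideanSpace ℝ (Fin n)) :
    Continuous (fun x : EuclideanSpace ℝ (Fin n) => Real.exp ⟪a, x⟫ * (1 + ⟪v, x⟫)) :=
  (wz_cont_exp a).mul (continuous_const.add (continuous_const.inner continuous_id))

lemma wz_strict {P : Set (EuclideanSpace ℝ (Fin n))} (hP : IsCompact P)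
    (h0 : 0 ∈ interior P) {a b : EuclideanSpace ℝ (Fin n)}
    (hcrit : (∫ x in P, Real.exp ⟪a, x⟫ • x) = 0) (hab : b ≠ a) :
    ∫ x in P, Real.exp ⟪a, x⟫ < ∫ x in P, Real.exp ⟪b, x⟫ := by
  set v := b - a with hvdef
  have hv : v ≠ 0 := sub_ne_zero.mpr hab
  set h : EuclideanSpace ℝ (Fin n) → ℝ :=
    fun x => Real.exp ⟪b, x⟫ - Real.exp ⟪a, x⟫ * (1 + ⟪v, x⟫) with hhdef
  have hbax : ∀ x : EuclideanSpace ℝ (Fin n), ⟪b, x⟫ = ⟪a, x⟫ + ⟪v, x⟫ := by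
    intro x
    rw [hvdef, inner_sub_left]
    ring
  have hh0 : ∀ x, 0 ≤ h x := by
    intro x
    have h1 : 1 + ⟪v, x⟫ ≤ Real.exp ⟪v, x⟫ := by
      have := Real.add_one_le_exp (⟪v, x⟫); linarith
    have h2 : Real.exp ⟪a, x⟫ * (1 + ⟪v, x⟫) ≤ Real.exp ⟪a, x⟫ * Real.exp ⟪v, x⟫ :=
      mul_le_mul_of_nonneg_left h1 (Real.exp_pos _).le
    simp only [hhdef]
    rw [hbax x, Real.exp_add]
    linarith
  have hhpos : ∀ x, ⟪v, x⟫ ≠ 0 → 0 < h x := by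
    intro x hx
    have h1 : 1 + ⟪v, x⟫ < Real.exp ⟪v, x⟫ := by
      have := Real.add_one_lt_exp hx; linarith
    have h2 : Real.exp ⟪a, x⟫ * (1 + ⟪v, x⟫) < Real.exp ⟪a, x⟫ * Real.exp ⟪v, x⟫ :=
      mul_lt_mul_of_pos_left h1 (Real.exp_pos _)
    simp only [hhdef]
    rw [hbax x, Real.exp_add]
    linarith
  have hcont : Continuous h := (wz_cont_exp b).sub (wz_cont_aff a v)
  have hinth : IntegrableOn h P := hcont.continuousOn.integrableOn_compact hP
  -- ball inside P
  obtain ⟨ε, hε, hball⟩ : ∃ ε > 0, ball (0 : EuclideanSpace ℝ (Fin n)) ε ⊆ P := by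
    rcases Metric.mem_nhds_iff.mp (mem_interior_iff_mem_nhds.mp h0) with ⟨ε, hε, hb⟩
    exact ⟨ε, hε, hb⟩
  set x₁ : EuclideanSpace ℝ (Fin n) := ((ε / 2) / ‖v‖) • v with hx1def
  have hnv : (0:ℝ) < ‖v‖ := norm_pos_iff.mpr hv
  have hx1inner : 0 < ⟪v, x₁⟫ := by
    rw [hx1def, real_inner_smul_right, real_inner_self_eq_norm_sq]
    positivity
  have hx1ball : x₁ ∈ ball (0 : EuclideanSpace ℝ (Fin n)) ε := by
    rw [mem_ball_zero_iff, hx1def, norm_smul]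
    rw [Real.norm_eq_abs, abs_of_pos (by positivity)]
    rw [div_mul_cancel₀ _ (ne_of_gt hnv)]
    linarith
  have hpos : 0 < ∫ x in P, h x := by
    rw [setIntegral_pos_iff_support_of_nonneg_ae
      (Filter.Eventually.of_forall hh0) hinth]
    have hU : IsOpen ({x | 0 < h x} ∩ ball (0:EuclideanSpace ℝ (Fin n)) ε) :=
      (isOpen_lt continuous_const hcont).inter isOpen_ball
    have hsub : {x | 0 < h x} ∩ ball (0:EuclideanSpace ℝ (Fin n)) ε ⊆
        Function.support h ∩ P := by
      rintro x ⟨hx1, hx2⟩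
      exact ⟨ne_of_gt hx1, hball hx2⟩
    refine lt_of_lt_of_le (hU.measure_pos volume ⟨x₁, ?_, hx1ball⟩) (measure_mono hsub)
    exact hhpos x₁ (ne_of_gt hx1inner)
  -- compute ∫ h
  have hsplit : ∫ x in P, h x
      = (∫ x in P, Real.exp ⟪b, x⟫) - ((∫ x in P, Real.exp ⟪a, x⟫)
        + ∫ x in P, Real.exp ⟪a, x⟫ * ⟪v, x⟫) := by
    rw [integral_sub (wz_int_exp hP b) ((wz_cont_aff a v).continuousOn.integrableOn_compact hP)]
    congr 1
    have : ∀ x : EuclideanSpace ℝ (Fin n),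
        Real.exp ⟪a, x⟫ * (1 + ⟪v, x⟫) = Real.exp ⟪a, x⟫ + Real.exp ⟪a, x⟫ * ⟪v, x⟫ := by
      intro x; ring
    simp_rw [this]
    exact integral_add (wz_int_exp hP a) (wz_int_mul hP a v)
  have hzero : ∫ x in P, Real.exp ⟪a, x⟫ * ⟪v, x⟫ = 0 := by
    rw [wz_inner_integral hP a v, hcrit, inner_zero_right]
  rw [hsplit, hzero] at hpos
  linarith

lemma wz_coercive {P : Set (EuclideanSpace ℝ (Fin n))} (hP : IsCompact P)
    {ε : ℝ} (hε : 0 < ε) (hball : ball (0 : EuclideanSpace ℝ (Fin n)) ε ⊆ P)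
    {a : EuclideanSpace ℝ (Fin n)} (ha : a ≠ 0) :
    (volume (closedBall (0 : EuclideanSpace ℝ (Fin n)) (ε/8))).toReal
      * Real.exp (ε/2 * ‖a‖) ≤ ∫ x in P, Real.exp ⟪a, x⟫ := by
  have hna : (0:ℝ) < ‖a‖ := norm_pos_iff.mpr ha
  set c : EuclideanSpace ℝ (Fin n) := ((3*ε/4) / ‖a‖) • a with hcdef
  set C := closedBall c (ε/8) with hCdef
  have hnc : ‖c‖ = 3*ε/4 := by
    rw [hcdef, norm_smul, Real.norm_eq_abs, abs_of_pos (by positivity),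
      div_mul_cancel₀ _ (ne_of_gt hna)]
  have hCP : C ⊆ P := by
    intro x hx
    apply hball
    rw [mem_ball_zero_iff]
    calc ‖x‖ = ‖(x - c) + c‖ := by rw [sub_add_cancel]
    _ ≤ ‖x - c‖ + ‖c‖ := norm_add_le _ _
    _ ≤ ε/8 + 3*ε/4 := by
        have := mem_closedBall_iff_norm.mp hx
        rw [hnc]; linarith
    _ < ε := by linarith
  have hinner : ∀ x ∈ C, ε/2 * ‖a‖ ≤ ⟪a, x⟫ := by
    intro x hx
    have h1 : ⟪a, c⟫ = 3*ε/4 * ‖a‖ := by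
      rw [hcdef, real_inner_smul_right, real_inner_self_eq_norm_sq]
      field_simp
    have h2 : |⟪a, x - c⟫| ≤ ‖a‖ * (ε/8) := by
      refine le_trans (abs_real_inner_le_norm a (x - c)) ?_
      exact mul_le_mul_of_nonneg_left (mem_closedBall_iff_norm.mp hx) (norm_nonneg a)
    have h3 : ⟪a, x⟫ = ⟪a, c⟫ + ⟪a, x - c⟫ := by rw [inner_sub_right]; ring
    have h4 : -(‖a‖ * (ε/8)) ≤ ⟪a, x - c⟫ := neg_le_of_abs_le h2
    rw [h3, h1]
    nlinarith
  have hmeas : MeasurableSet C := measurableSet_closedBall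
  have h1 : ∫ _x in C, Real.exp (ε/2 * ‖a‖) ≤ ∫ x in C, Real.exp ⟪a, x⟫ := by
    refine setIntegral_mono_on ?_ ?_ hmeas ?_
    · exact continuousOn_const.integrableOn_compact (isCompact_closedBall _ _)
    · exact (wz_cont_exp a).continuousOn.integrableOn_compact (isCompact_closedBall _ _)
    · intro x hx
      exact Real.exp_le_exp.mpr (hinner x hx)
  have h2 : ∫ x in C, Real.exp ⟪a, x⟫ ≤ ∫ x in P, Real.exp ⟪a, x⟫ := by
    refine setIntegral_mono_set (wz_int_exp hP a) ?_ (HasSubset.Subset.eventuallyLE hCP)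
    exact Filter.Eventually.of_forall (fun x => (Real.exp_pos _).le)
  have h3 : ∫ _x in C, Real.exp (ε/2 * ‖a‖) =
      (volume (closedBall (0 : EuclideanSpace ℝ (Fin n)) (ε/8))).toReal
        * Real.exp (ε/2 * ‖a‖) := by
    rw [setIntegral_const, smul_eq_mul]
    congr 1
    rw [measureReal_def, hCdef, Measure.addHaar_closedBall volume c (by positivity : (0:ℝ) ≤ ε/8),
      Measure.addHaar_closedBall volume 0 (by positivity : (0:ℝ) ≤ ε/8)]
  linarith [h1, h2, h3.symm.le]

lemma wz_contW {P : Set (EuclideanSpace ℝ (Fin n))} (hP : IsCompact P) :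
    Continuous (fun a : EuclideanSpace ℝ (Fin n) => ∫ x in P, Real.exp ⟪a, x⟫) := by
  obtain ⟨R₀, hR₀⟩ := hP.isBounded.exists_norm_le
  set R := max R₀ 0 with hRdef
  have hR : ∀ x ∈ P, ‖x‖ ≤ R := fun x hx => le_trans (hR₀ x hx) (le_max_left _ _)
  have hR0 : 0 ≤ R := le_max_right _ _
  rw [continuous_iff_continuousAt]
  intro a₀
  refine continuousAt_of_dominated (F := fun a x => Real.exp ⟪a, x⟫)
    (bound := fun _ => Real.exp ((‖a₀‖ + 1) * R)) ?_ ?_ ?_ ?_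
  · exact Filter.Eventually.of_forall fun a => (wz_cont_exp a).aestronglyMeasurable.restrict
  · filter_upwards [Metric.ball_mem_nhds a₀ one_pos] with a ha
    filter_upwards [ae_restrict_mem hP.measurableSet] with x hx
    rw [Real.norm_eq_abs, abs_of_pos (Real.exp_pos _), Real.exp_le_exp]
    calc ⟪a, x⟫ ≤ ‖a‖ * ‖x‖ := real_inner_le_norm a x
    _ ≤ (‖a₀‖ + 1) * R := by
        have h1 : ‖a‖ ≤ ‖a₀‖ + 1 := by
          have := mem_ball_iff_norm.mp ha
          have := norm_sub_norm_le a a₀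
          linarith
        exact mul_le_mul h1 (hR x hx) (norm_nonneg x) (by positivity)
  · exact (integrableOn_const_iff).mpr (Or.inr hP.measure_lt_top)
  · refine Filter.Eventually.of_forall fun x => ?_
    exact (Real.continuous_exp.comp (continuous_id.inner continuous_const)).continuousAt

lemma wz_crit {P : Set (EuclideanSpace ℝ (Fin n))} (hP : IsCompact P)
    {a₀ : EuclideanSpace ℝ (Fin n)}
    (hmin : ∀ a, ∫ x in P, Real.exp ⟪a₀, x⟫ ≤ ∫ x in P, Real.exp ⟪a, x⟫) :
    (∫ x in P, Real.exp ⟪a₀, x⟫ • x) = 0 := by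
  have key : ∀ v : EuclideanSpace ℝ (Fin n),
      ⟪v, ∫ x in P, Real.exp ⟪a₀, x⟫ • x⟫ = 0 := by
    intro v
    obtain ⟨R₀, hR₀⟩ := hP.isBounded.exists_norm_le
    set R := max R₀ 0 with hRdef
    have hR : ∀ x ∈ P, ‖x‖ ≤ R := fun x hx => le_trans (hR₀ x hx) (le_max_left _ _)
    have hR0 : 0 ≤ R := le_max_right _ _
    set F : ℝ → EuclideanSpace ℝ (Fin n) → ℝ :=
      fun t x => Real.exp (⟪a₀, x⟫ + t * ⟪v, x⟫) with hFdef
    set F' : ℝ → EuclideanSpace ℝ (Fin n) → ℝ :=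
      fun t x => Real.exp (⟪a₀, x⟫ + t * ⟪v, x⟫) * ⟪v, x⟫ with hF'def
    have hFcont : ∀ t, Continuous (F t) := by
      intro t
      exact Real.continuous_exp.comp ((continuous_const.inner continuous_id).add
        (continuous_const.mul (continuous_const.inner continuous_id)))
    have hF'cont : ∀ t, Continuous (F' t) :=
      fun t => (hFcont t).mul (continuous_const.inner continuous_id)
    have hder := hasDerivAt_integral_of_dominated_loc_of_deriv_le
      (μ := volume.restrict P) (x₀ := (0:ℝ)) (F := F) (F' := F')
      (bound := fun _ => ‖v‖ * R * Real.exp (‖a₀‖ * R + ‖v‖ * R))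
      (Metric.ball_mem_nhds 0 one_pos)
      (Filter.Eventually.of_forall fun t => (hFcont t).aestronglyMeasurable.restrict)
      (((hFcont 0).continuousOn.integrableOn_compact hP))
      ((hF'cont 0).aestronglyMeasurable.restrict)
      ?_ ?_ ?_
    · -- use the derivative at the min
      have hg : ∀ t : ℝ, (∫ x in P, F 0 x) ≤ ∫ x in P, F t x := by
        intro t
        have h1 : (∫ x in P, F t x) = ∫ x in P, Real.exp ⟪a₀ + t • v, x⟫ := by
          refine integral_congr_ae (Filter.Eventually.of_forall fun x => ?_)
          simp only [hFdef, inner_add_left, real_inner_smul_left]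
        have h0 : (∫ x in P, F 0 x) = ∫ x in P, Real.exp ⟪a₀, x⟫ := by
          refine integral_congr_ae (Filter.Eventually.of_forall fun x => ?_)
          simp [hFdef]
        rw [h0, h1]
        exact hmin _
      have hloc : IsLocalMin (fun t => ∫ x in P, F t x) 0 :=
        Filter.Eventually.of_forall fun t => hg t
      have hd0 : (∫ x in P, F' 0 x) = 0 := hloc.hasDerivAt_eq_zero hder.2
      have : (∫ x in P, F' 0 x) = ∫ x in P, Real.exp ⟪a₀, x⟫ * ⟪v, x⟫ := by
        refine integral_congr_ae (Filter.Eventually.of_forall fun x => ?_)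
        simp [hF'def]
      rw [this] at hd0
      rw [← wz_inner_integral hP a₀ v, hd0]
    · -- bound on F'
      filter_upwards [ae_restrict_mem hP.measurableSet] with x hx
      intro t ht
      have hxR := hR x hx
      have htle : |t| ≤ 1 := by
        have := mem_ball_iff_norm.mp ht
        simpa using this.le
      have h1 : ⟪a₀, x⟫ + t * ⟪v, x⟫ ≤ ‖a₀‖ * R + ‖v‖ * R := by
        have c1 : ⟪a₀, x⟫ ≤ ‖a₀‖ * ‖x‖ := real_inner_le_norm _ _
        have c2 : |t * ⟪v, x⟫| ≤ 1 * (‖v‖ * ‖x‖) := by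
          rw [abs_mul]
          exact mul_le_mul htle (abs_real_inner_le_norm _ _) (abs_nonneg _) zero_le_one
        have c3 : t * ⟪v, x⟫ ≤ ‖v‖ * ‖x‖ := by
          have := le_of_abs_le c2; linarith
        have c4 : ‖a₀‖ * ‖x‖ ≤ ‖a₀‖ * R := mul_le_mul_of_nonneg_left hxR (norm_nonneg _)
        have c5 : ‖v‖ * ‖x‖ ≤ ‖v‖ * R := mul_le_mul_of_nonneg_left hxR (norm_nonneg _)
        linarith
      have h2 : ‖F' t x‖ = Real.exp (⟪a₀, x⟫ + t * ⟪v, x⟫) * |⟪v, x⟫| := by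
        rw [hF'def, Real.norm_eq_abs, abs_mul, abs_of_pos (Real.exp_pos _)]
      rw [h2]
      have h3 : |⟪v, x⟫| ≤ ‖v‖ * R :=
        le_trans (abs_real_inner_le_norm _ _) (mul_le_mul_of_nonneg_left hxR (norm_nonneg _))
      have h4 : Real.exp (⟪a₀, x⟫ + t * ⟪v, x⟫) ≤ Real.exp (‖a₀‖ * R + ‖v‖ * R) :=
        Real.exp_le_exp.mpr h1
      calc Real.exp (⟪a₀, x⟫ + t * ⟪v, x⟫) * |⟪v, x⟫|
          ≤ Real.exp (‖a₀‖ * R + ‖v‖ * R) * (‖v‖ * R) := by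
            exact mul_le_mul h4 h3 (abs_nonneg _) (Real.exp_pos _).le
      _ = ‖v‖ * R * Real.exp (‖a₀‖ * R + ‖v‖ * R) := by ring
    · exact (integrableOn_const_iff).mpr (Or.inr hP.measure_lt_top)
    · -- differentiability
      refine Filter.Eventually.of_forall fun x => ?_
      intro t ht
      have : HasDerivAt (fun s : ℝ => ⟪a₀, x⟫ + s * ⟪v, x⟫) ⟪v, x⟫ t := by
        simpa using ((hasDerivAt_id t).mul_const ⟪v, x⟫).const_add ⟪a₀, x⟫
      exact this.exp
  have := key (∫ x in P, Real.exp ⟪a₀, x⟫ • x)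
  rwa [real_inner_self_eq_norm_sq, pow_eq_zero_iff (by norm_num), norm_eq_zero] at this

theorem stmt_8 (n : ℕ) (P : Set (EuclideanSpace ℝ (Fin n)))
    (hP : IsCompact P) (hconv : Convex ℝ P) (h0 : 0 ∈ interior P)
    (W : EuclideanSpace ℝ (Fin n) → ℝ)
    (hW : ∀ a, W a = ∫ x in P, Real.exp ⟪a, x⟫) :
    ∃ a₀ : EuclideanSpace ℝ (Fin n),
      (∀ a, W a₀ ≤ W a) ∧
      (∀ a, (∀ b, W a ≤ W b) → a = a₀) ∧
      (∫ x in P, Real.exp ⟪a₀, x⟫ • x) = 0 ∧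
      (∀ a, (∫ x in P, Real.exp ⟪a, x⟫ • x) = 0 → a = a₀) := by
  have hWfun : W = fun a => ∫ x in P, Real.exp ⟪a, x⟫ := funext hW
  obtain ⟨ε, hε, hball⟩ : ∃ ε > 0, ball (0 : EuclideanSpace ℝ (Fin n)) ε ⊆ P := by
    rcases Metric.mem_nhds_iff.mp (mem_interior_iff_mem_nhds.mp h0) with ⟨ε, hε, hb⟩
    exact ⟨ε, hε, hb⟩
  set κ := (volume (closedBall (0 : EuclideanSpace ℝ (Fin n)) (ε/8))).toReal with hκdef
  have hκ : 0 < κ := by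
    refine ENNReal.toReal_pos ?_ (isCompact_closedBall _ _).measure_lt_top.ne
    refine ne_of_gt (lt_of_lt_of_le (measure_ball_pos volume (0 : EuclideanSpace ℝ (Fin n)) (by positivity : (0:ℝ) < ε/8)) ?_)
    exact measure_mono ball_subset_closedBall
  -- coercivity threshold
  have hinner : Filter.Tendsto (fun t : ℝ => ε/2 * t) Filter.atTop Filter.atTop :=
    Filter.tendsto_id.const_mul_atTop (by positivity)
  have hexp : Filter.Tendsto (fun t : ℝ => Real.exp (ε/2 * t)) Filter.atTop Filter.atTop :=
    Real.tendsto_exp_atTop.comp hinner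
  have htend : Filter.Tendsto (fun t : ℝ => κ * Real.exp (ε/2 * t))
      Filter.atTop Filter.atTop := hexp.const_mul_atTop hκ
  obtain ⟨R₁, hR₁⟩ := Filter.eventually_atTop.mp (htend.eventually_gt_atTop (W 0))
  set R₂ := max R₁ 0 with hR₂def
  have hcW : Continuous W := by rw [hWfun]; exact wz_contW hP
  obtain ⟨a₀, ha₀mem, ha₀min⟩ :=
    (isCompact_closedBall (0 : EuclideanSpace ℝ (Fin n)) R₂).exists_isMinOn
      ⟨0, mem_closedBall_self (le_max_right _ _)⟩ hcW.continuousOn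
  have hglob : ∀ a, W a₀ ≤ W a := by
    intro a
    by_cases hmem : a ∈ closedBall (0 : EuclideanSpace ℝ (Fin n)) R₂
    · exact ha₀min hmem
    · have hnorm : R₂ < ‖a‖ := by
        rw [mem_closedBall_zero_iff] at hmem
        exact lt_of_not_ge hmem
      have hane : a ≠ 0 := by
        intro h
        rw [h, norm_zero] at hnorm
        exact absurd hnorm (not_lt.mpr (le_max_right _ _))
      have h1 : W 0 < κ * Real.exp (ε/2 * ‖a‖) :=
        hR₁ ‖a‖ (le_trans (le_max_left _ _) hnorm.le)
      have h2 : κ * Real.exp (ε/2 * ‖a‖) ≤ W a := by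
        rw [hW a]; exact wz_coercive hP hε hball hane
      have h3 : W a₀ ≤ W 0 := ha₀min (mem_closedBall_self (le_max_right _ _))
      linarith
  have hcrit : (∫ x in P, Real.exp ⟪a₀, x⟫ • x) = 0 := by
    refine wz_crit hP fun a => ?_
    rw [← hW a, ← hW a₀]
    exact hglob a
  refine ⟨a₀, hglob, ?_, hcrit, ?_⟩
  · intro a hamin
    by_contra hne
    have hs := wz_strict hP h0 hcrit hne
    rw [← hW a, ← hW a₀] at hs
    exact absurd (hamin a₀) (not_le.mpr hs)
  · intro a hacrit
    by_contra hne
    have hs := wz_strict hP h0 hacrit (Ne.symm hne)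
    rw [← hW a, ← hW a₀] at hs
    exact absurd (hglob a) (not_le.mpr hs)
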